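/- arXiv:1812.06951 — 3 statements merged into one kernel-verified Lean document; each statement's English description precedes it below -/
import Mathlib

section
/- Let n' ≥ 1 and let [1, n'] be partitioned in two ways into consecutive integer intervals Q_1 < Q_2 < ... < Q_k and R_1 < R_2 < ... < R_m, each interval of size at most b. Then there exists a set A ⊆ [1, n'] with |A| ≥ n'/b such that A contains at most one element from each Q_j and at most one element from each R_l. -/
namespace CTIP

/-- The least cut point of the cut sequence `qc` (with `k` blocks) strictly above `x`. -/
noncomputable def ncut (k : ℕ) (qc : ℕ → ℕ) (x : ℕ) : ℕ :=
  sInf {y | ∃ i ≤ k, qc i = y ∧ x < y}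

/-- The greedy head-jumping sequence. -/
noncomputable def seq (k m : ℕ) (qc rc : ℕ → ℕ) : ℕ → ℕ :=
  fun t => Nat.rec 1 (fun _ x => max (ncut k qc x) (ncut m rc x)) t

lemma seq_zero (k m : ℕ) (qc rc : ℕ → ℕ) : seq k m qc rc 0 = 1 := rfl

lemma seq_succ (k m : ℕ) (qc rc : ℕ → ℕ) (t : ℕ) :
    seq k m qc rc (t + 1)
      = max (ncut k qc (seq k m qc rc t)) (ncut m rc (seq k m qc rc t)) := rfl

section
variable {n' k : ℕ} {qc : ℕ → ℕ}

lemma mono' (hqmono : ∀ i < k, qc i < qc (i + 1)) :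
    ∀ i j, i < j → j ≤ k → qc i < qc j := by
  intro i j
  induction j with
  | zero => intro h _; exact absurd h (Nat.not_lt_zero i)
  | succ j ih =>
    intro hij hjk
    rcases Nat.lt_or_ge i j with h | h
    · exact (ih h (by omega)).trans (hqmono j (by omega))
    · have : i = j := by omega
      subst this; exact hqmono i (by omega)

lemma exists_block (hq0 : qc 0 = 1) (hqk : qc k = n' + 1)
    {x : ℕ} (hx1 : 1 ≤ x) (hx2 : x ≤ n') :
    ∃ i < k, qc i ≤ x ∧ x < qc (i + 1) := by
  classical
  have h0 : qc 0 ≤ x := by omega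
  set P : ℕ → Prop := fun i => qc i ≤ x with hP
  set i := Nat.findGreatest P k with hi
  have hspec : P i := Nat.findGreatest_spec (Nat.zero_le k) h0
  have hspec' : qc i ≤ x := hspec
  have hik : i < k := by
    rcases Nat.lt_or_ge i k with h | h
    · exact h
    · exfalso
      have hik' : i = k := le_antisymm (Nat.findGreatest_le k) h
      have hxk : qc k ≤ x := hik' ▸ hspec'
      omega
  refine ⟨i, hik, hspec', ?_⟩
  have hng : ¬ P (i + 1) :=
    Nat.findGreatest_is_greatest (by rw [← hi]; omega) (by omega)
  have : ¬ qc (i + 1) ≤ x := hng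
  omega

lemma ncut_eq (hqmono : ∀ i < k, qc i < qc (i + 1))
    {i x : ℕ} (hik : i < k) (h1 : qc i ≤ x) (h2 : x < qc (i + 1)) :
    ncut k qc x = qc (i + 1) := by
  have hmem : qc (i + 1) ∈ {y | ∃ j ≤ k, qc j = y ∧ x < y} := ⟨i + 1, hik, rfl, h2⟩
  have hne : {y | ∃ j ≤ k, qc j = y ∧ x < y}.Nonempty := ⟨_, hmem⟩
  have hInf : ncut k qc x ∈ {y | ∃ j ≤ k, qc j = y ∧ x < y} := Nat.sInf_mem hne
  obtain ⟨j, hjk, hje, hxj⟩ := hInf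
  have hle : ncut k qc x ≤ qc (i + 1) := Nat.sInf_le hmem
  have hge : qc (i + 1) ≤ ncut k qc x := by
    rw [← hje]
    rcases Nat.lt_or_ge j (i + 1) with h | h
    · exfalso
      have hji : qc j ≤ qc i := by
        rcases Nat.lt_or_ge j i with h' | h'
        · exact le_of_lt (mono' hqmono j i h' (by omega))
        · have : j = i := by omega
          rw [this]
      omega
    · rcases Nat.eq_or_lt_of_le h with h' | h'
      · rw [h']
      · exact le_of_lt (mono' hqmono (i + 1) j h' hjk)
  exact le_antisymm hle hge

lemma ncut_props (hq0 : qc 0 = 1) (hqk : qc k = n' + 1)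
    (hqmono : ∀ i < k, qc i < qc (i + 1)) {b : ℝ}
    (hqsize : ∀ i < k, ((qc (i + 1) - qc i : ℕ) : ℝ) ≤ b)
    {x : ℕ} (hx1 : 1 ≤ x) (hx2 : x ≤ n') :
    x < ncut k qc x ∧ (ncut k qc x : ℝ) ≤ x + b := by
  obtain ⟨i, hik, h1, h2⟩ := exists_block hq0 hqk hx1 hx2
  have he := ncut_eq hqmono hik h1 h2
  rw [he]
  refine ⟨h2, ?_⟩
  have hs := hqsize i hik
  have hle : qc i ≤ qc (i + 1) := le_of_lt (hqmono i hik)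
  rw [Nat.cast_sub hle] at hs
  have h1' : (qc i : ℝ) ≤ x := by exact_mod_cast h1
  linarith

/-- If `x` lies in block `i`, then `ncut` of `x` is at least the right end of that block. -/
lemma ncut_block (hqmono : ∀ i < k, qc i < qc (i + 1))
    {i x : ℕ} (hik : i < k) (h1 : qc i ≤ x) (h2 : x < qc (i + 1)) :
    qc (i + 1) ≤ ncut k qc x := le_of_eq (ncut_eq hqmono hik h1 h2).symm

end

end CTIP

/-- Two interval partitions of `[1, n']` into consecutive blocks of size at most `b`
admit a common transversal `A` of size at least `n'/b`, meeting every block of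
either partition in at most one element.  The partitions are encoded by their
cut sequences `qc` and `rc`: the blocks are `[qc i, qc (i+1))` for `i < k`, with
`qc 0 = 1` and `qc k = n' + 1` (similarly for `rc` with `m` blocks). -/
theorem common_transversal_of_interval_partitions
    (n' : ℕ) (hn' : 1 ≤ n') (b : ℝ)
    (k m : ℕ) (qc rc : ℕ → ℕ)
    (hq0 : qc 0 = 1) (hqk : qc k = n' + 1)
    (hqmono : ∀ i < k, qc i < qc (i + 1))
    (hqsize : ∀ i < k, ((qc (i + 1) - qc i : ℕ) : ℝ) ≤ b)
    (hr0 : rc 0 = 1) (hrm : rc m = n' + 1)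
    (hrmono : ∀ j < m, rc j < rc (j + 1))
    (hrsize : ∀ j < m, ((rc (j + 1) - rc j : ℕ) : ℝ) ≤ b) :
    ∃ A : Finset ℕ, A ⊆ Finset.Icc 1 n' ∧ (n' : ℝ) / b ≤ A.card ∧
      (∀ i < k, (A ∩ Finset.Ico (qc i) (qc (i + 1))).card ≤ 1) ∧
      (∀ j < m, (A ∩ Finset.Ico (rc j) (rc (j + 1))).card ≤ 1) := by
  classical
  set f := CTIP.seq k m qc rc with hf
  have hf0 : f 0 = 1 := rfl
  have hfs : ∀ t, f (t + 1) = max (CTIP.ncut k qc (f t)) (CTIP.ncut m rc (f t)) :=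
    fun t => rfl
  -- b is at least 1 (hence positive)
  have hk0 : 0 < k := by
    rcases Nat.eq_zero_or_pos k with h | h
    · exfalso; rw [h] at hqk; omega
    · exact h
  have hb1 : (1 : ℝ) ≤ b := by
    have hs := hqsize 0 hk0
    have hmm := hqmono 0 hk0
    have h1 : 1 ≤ qc (0 + 1) - qc 0 := by omega
    calc (1 : ℝ) ≤ ((qc (0 + 1) - qc 0 : ℕ) : ℝ) := by exact_mod_cast h1
      _ ≤ b := hs
  have hbpos : (0 : ℝ) < b := by linarith
  -- step lemma
  have step : ∀ t, 1 ≤ f t → f t ≤ n' →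
      f t < f (t + 1) ∧ (f (t + 1) : ℝ) ≤ f t + b := by
    intro t h1 h2
    have hq := CTIP.ncut_props hq0 hqk hqmono hqsize h1 h2
    have hr := CTIP.ncut_props hr0 hrm hrmono hrsize h1 h2
    rw [hfs t]
    constructor
    · exact lt_max_of_lt_left hq.1
    · rw [Nat.cast_max]
      exact max_le hq.2 hr.2
  -- existence of an escape time
  have hesc : ∃ t, n' < f t := by
    by_cases hall : ∀ s < n', f s ≤ n'
    · refine ⟨n', ?_⟩
      have key : ∀ t ≤ n', (∀ s < t, f s ≤ n') → t + 1 ≤ f t := by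
        intro t
        induction t with
        | zero => intro _ _; omega
        | succ t ih =>
          intro ht hs
          have h1 : t + 1 ≤ f t := ih (by omega) (fun s hst => hs s (by omega))
          have h2 : f t ≤ n' := hs t (by omega)
          have := (step t (by omega) h2).1
          omega
      have := key n' le_rfl hall
      omega
    · push_neg at hall
      obtain ⟨s, _, hs⟩ := hall
      exact ⟨s, hs⟩
  set T := Nat.find hesc with hT
  have hTspec : n' < f T := Nat.find_spec hesc
  have hTmin : ∀ s < T, f s ≤ n' := by
    intro s hs
    have := Nat.find_min hesc hs
    omega
  -- positivity along the way
  have hpos : ∀ s ≤ T, 1 ≤ f s := by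
    intro s
    induction s with
    | zero => intro _; omega
    | succ s ih =>
      intro hs
      have h1 : 1 ≤ f s := ih (by omega)
      have h2 : f s ≤ n' := hTmin s (by omega)
      have := (step s h1 h2).1
      omega
  -- strict monotonicity up to T
  have hmonoT : ∀ s t, s < t → t ≤ T → f s < f t := by
    intro s t hst htT
    induction t with
    | zero => omega
    | succ t ih =>
      have hstep' : f t < f (t + 1) :=
        (step t (hpos t (by omega)) (hTmin t (by omega))).1
      rcases Nat.lt_or_ge s t with h | h
      · exact (ih h (by omega)).trans hstep'
      · have : s = t := by omega
        subst this; exact hstep'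
  -- real growth bound
  have hgrow : ∀ s ≤ T, (f s : ℝ) ≤ 1 + s * b := by
    intro s
    induction s with
    | zero => intro _; rw [hf0]; norm_num
    | succ s ih =>
      intro hs
      have h1 := hpos s (by omega)
      have h2 := hTmin s (by omega)
      have h3 := (step s h1 h2).2
      have h4 := ih (by omega)
      push_cast
      push_cast at h4
      linarith
  -- size bound
  have hTb : (n' : ℝ) / b ≤ T := by
    rw [div_le_iff₀ hbpos]
    have h1 := hgrow T le_rfl
    have h2 : (n' : ℝ) + 1 ≤ f T := by exact_mod_cast hTspec
    linarith
  -- the transversal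
  refine ⟨(Finset.range T).image f, ?_, ?_, ?_, ?_⟩
  · intro x hx
    simp only [Finset.mem_image, Finset.mem_range] at hx
    obtain ⟨s, hs, rfl⟩ := hx
    exact Finset.mem_Icc.mpr ⟨hpos s (by omega), hTmin s hs⟩
  · have hcard : ((Finset.range T).image f).card = T := by
      rw [Finset.card_image_of_injOn, Finset.card_range]
      intro a ha b' hb hab
      simp only [Finset.coe_range, Set.mem_Iio] at ha hb
      by_contra hne
      rcases Nat.lt_or_ge a b' with h | h
      · exact absurd hab (Nat.ne_of_lt (hmonoT a b' h (by omega)))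
      · have : b' < a := by omega
        exact absurd hab.symm (Nat.ne_of_lt (hmonoT b' a this (by omega)))
    rw [hcard]; exact hTb
  · intro i hik
    apply Finset.card_le_one.mpr
    intro x hx y hy
    simp only [Finset.mem_inter, Finset.mem_image, Finset.mem_range, Finset.mem_Ico] at hx hy
    obtain ⟨⟨s, hs, rfl⟩, hx1, hx2⟩ := hx
    obtain ⟨⟨t, ht, rfl⟩, hy1, hy2⟩ := hy
    by_contra hne
    have key : ∀ s t, s < T → t < T →
        qc i ≤ f s → f s < qc (i + 1) → qc i ≤ f t → f t < qc (i + 1) →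
        s < t → False := by
      intro s t hs ht hx1 hx2 hy1 hy2 hst
      have hn : qc (i + 1) ≤ CTIP.ncut k qc (f s) :=
        CTIP.ncut_block hqmono hik hx1 hx2
      have hstep' : CTIP.ncut k qc (f s) ≤ f (s + 1) := by
        rw [hfs s]; exact le_max_left _ _
      have hmo : f (s + 1) ≤ f t := by
        rcases Nat.eq_or_lt_of_le (Nat.succ_le_of_lt hst) with h | h
        · exact le_of_eq (by rw [← h])
        · exact le_of_lt (hmonoT (s + 1) t h (by omega))
      omega
    rcases Nat.lt_or_ge s t with h | h
    · exact key s t hs ht hx1 hx2 hy1 hy2 h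
    · rcases Nat.eq_or_lt_of_le h with h' | h'
      · exact hne (by rw [h'])
      · exact key t s ht hs hy1 hy2 hx1 hx2 h'
  · intro j hjm
    apply Finset.card_le_one.mpr
    intro x hx y hy
    simp only [Finset.mem_inter, Finset.mem_image, Finset.mem_range, Finset.mem_Ico] at hx hy
    obtain ⟨⟨s, hs, rfl⟩, hx1, hx2⟩ := hx
    obtain ⟨⟨t, ht, rfl⟩, hy1, hy2⟩ := hy
    by_contra hne
    have key : ∀ s t, s < T → t < T →
        rc j ≤ f s → f s < rc (j + 1) → rc j ≤ f t → f t < rc (j + 1) →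
        s < t → False := by
      intro s t hs ht hx1 hx2 hy1 hy2 hst
      have hn : rc (j + 1) ≤ CTIP.ncut m rc (f s) :=
        CTIP.ncut_block hrmono hjm hx1 hx2
      have hstep' : CTIP.ncut m rc (f s) ≤ f (s + 1) := by
        rw [hfs s]; exact le_max_right _ _
      have hmo : f (s + 1) ≤ f t := by
        rcases Nat.eq_or_lt_of_le (Nat.succ_le_of_lt hst) with h | h
        · exact le_of_eq (by rw [← h])
        · exact le_of_lt (hmonoT (s + 1) t h (by omega))
      omega
    rcases Nat.lt_or_ge s t with h | h
    · exact key s t hs ht hx1 hx2 hy1 hy2 h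
    · rcases Nat.eq_or_lt_of_le h with h' | h'
      · exact hne (by rw [h'])
      · exact key t s ht hs hy1 hy2 hx1 hx2 h'
end

section
/- Gluing agreement along an incomparable ordered partition: Let (X_1, ..., X_p) be an ordered partition of X, and let T' and S' be rooted binary X-trees such that (a) for all 1 ≤ i < p, lca_{T'}(X_i) is incomparable with lca_{T'}(X_{i+1} ∪ ... ∪ X_p); (b) the same holds in S'; and (c) T'|X_i = S'|X_i for all i. Then T' = S'. -/
/-- Rooted binary trees with leaves labeled by `X` (with designated left/right children). -/
inductive BTree (X : Type) where
  | leaf : X → BTree X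
  | node : BTree X → BTree X → BTree X

namespace BTree

variable {X : Type} [DecidableEq X]

/-- Left-to-right (pre-order) leaf sequence. -/
def seq : BTree X → List X
  | leaf x => [x]
  | node l r => seq l ++ seq r

/-- Leaf set. -/
def leaves (t : BTree X) : Finset X := t.seq.toFinset

/-- Number of leaves. -/
def size (t : BTree X) : ℕ := t.seq.length

/-- A phylogenetic tree: leaves are bijectively labeled (no repeated labels). -/
def Phylo (t : BTree X) : Prop := t.seq.Nodup

def isLeaf : BTree X → Prop
  | leaf _ => True
  | node _ _ => False

/-- A rooted caterpillar: every internal node (including the root) has a leaf child. -/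
def isCaterpillar : BTree X → Prop
  | leaf _ => True
  | node l r => (isLeaf l ∧ isCaterpillar r) ∨ (isLeaf r ∧ isCaterpillar l)

/-- A perfectly balanced binary tree. -/
def isPerfect : BTree X → Prop
  | leaf _ => True
  | node l r => isPerfect l ∧ isPerfect r ∧ size l = size r

/-- Restriction `T|A`: minimal subtree spanning the leaves in `A`, with degree-two
vertices suppressed; `none` if `A` contains no leaf of the tree. -/
def restrict : BTree X → Finset X → Option (BTree X)
  | leaf x, A => if x ∈ A then some (leaf x) else none
  | node l r, A =>
    match restrict l A, restrict r A with
    | some l', some r' => some (node l' r')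
    | some l', none => some l'
    | none, some r' => some r'
    | none, none => none

/-- Nodes of a tree are addressed by root-paths: `false` = go left, `true` = go right.
`subtreeAt t p` is the subtree rooted at the node with address `p` (if it exists). -/
def subtreeAt : BTree X → List Bool → Option (BTree X)
  | t, [] => some t
  | leaf _, _ :: _ => none
  | node l _, false :: p => subtreeAt l p
  | node _ r, true :: p => subtreeAt r p

/-- Address of the least common ancestor of a set of leaves. -/
def lcaPos : BTree X → Finset X → List Bool
  | leaf _, _ => []
  | node l r, A =>
    if A ⊆ l.leaves then false :: lcaPos l A
    else if A ⊆ r.leaves then true :: lcaPos r A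
    else []

/-- `v ⪯ u` in the ancestor order iff the address of `u` is a prefix of the address of `v`.
Two nodes are incomparable if neither address is a prefix of the other. -/
def Incomp (p q : List Bool) : Prop := ¬ p <+: q ∧ ¬ q <+: p

/-- `StrictBelow p q`: the node at address `p` is a strict descendant of the node at `q`. -/
def StrictBelow (p q : List Bool) : Prop := q <+: p ∧ p ≠ q

/-- Identity of rooted phylogenetic trees: label-preserving graph isomorphism
(the left/right designation is irrelevant). -/
def REq : BTree X → BTree X → Prop
  | leaf x, leaf y => x = y
  | node l r, node l' r' => (REq l l' ∧ REq r r') ∨ (REq l r' ∧ REq r l')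
  | _, _ => False

/-- The splits (edge-induced leaf bipartitions, each recorded by both of its sides)
of the unrooted tree obtained by de-rooting `t`. -/
def usplits (t : BTree X) : Set (Finset X) :=
  { A | ∃ p u, t.subtreeAt p = some u ∧ (A = u.leaves ∨ A = t.leaves \ u.leaves) }

/-- `t` and `s` de-root to identical unrooted phylogenetic trees. -/
def UEq (t s : BTree X) : Prop := t.leaves = s.leaves ∧ usplits t = usplits s

/-- Rooted agreement of `t` and `s` on leaf set `A`: `t|A = s|A` as rooted trees. -/
def RAgree (t s : BTree X) (A : Finset X) : Prop :=
  ∃ t' s', t.restrict A = some t' ∧ s.restrict A = some s' ∧ REq t' s'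

/-- Unrooted agreement of (the de-rootings of) `t` and `s` on leaf set `A`. -/
def UAgree (t s : BTree X) (A : Finset X) : Prop :=
  ∃ t' s', t.restrict A = some t' ∧ s.restrict A = some s' ∧ UEq t' s'

/-- `t` de-roots to an unrooted caterpillar. -/
def UCaterpillar (t : BTree X) : Prop := ∃ c : BTree X, isCaterpillar c ∧ UEq c t

/-- The subtrees hanging off the path from the left-most leaf to the root
(`Q_1, …, Q_k` in the paper; `Q_1` is the left-most leaf itself). -/
def leftSpine : BTree X → List (BTree X)
  | leaf x => [leaf x]
  | node l r => leftSpine l ++ [r]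

/-- The subtrees hanging off the path from the root to the right-most leaf
(`R_1, …, R_m` in the paper; `R_m` is the right-most leaf itself). -/
def rightSpine : BTree X → List (BTree X)
  | leaf x => [leaf x]
  | node l r => l :: rightSpine r

/-- Graph distance (number of edges) between leaves `x` and `y` in the unrooted
tree obtained by de-rooting `t` (the suppressed root accounts for the `-1`). -/
def udist (t : BTree X) (x y : X) : ℕ :=
  (lcaPos t {x}).length - (lcaPos t {x, y}).length +
    ((lcaPos t {y}).length - (lcaPos t {x, y}).length) -
    (if lcaPos t {x, y} = [] then 1 else 0)

end BTree

namespace BTree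

variable {X : Type} [DecidableEq X]

lemma leaves_node (l r : BTree X) : (node l r).leaves = l.leaves ∪ r.leaves := by
  simp [leaves, seq]

lemma leaves_nonempty (t : BTree X) : t.leaves.Nonempty := by
  induction t with
  | leaf x => exact ⟨x, by simp [leaves, seq]⟩
  | node l r ihl ihr =>
      rw [leaves_node]
      exact Finset.Nonempty.mono Finset.subset_union_left ihl

lemma phylo_node {l r : BTree X} (h : (node l r).Phylo) :
    l.Phylo ∧ r.Phylo ∧ Disjoint l.leaves r.leaves := by
  have h' := h
  rw [Phylo, seq, List.nodup_append] at h'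
  refine ⟨h'.1, h'.2.1, ?_⟩
  rw [Finset.disjoint_left]
  intro a ha hb
  exact h'.2.2 a (by simpa [leaves] using ha) a (by simpa [leaves] using hb) rfl

lemma restrict_of_subset {t : BTree X} {A : Finset X} (h : t.leaves ⊆ A) :
    t.restrict A = some t := by
  induction t with
  | leaf x =>
      have : x ∈ A := h (by simp [leaves, seq])
      simp [restrict, this]
  | node l r ihl ihr =>
      rw [leaves_node, Finset.union_subset_iff] at h
      simp only [restrict, ihl h.1, ihr h.2]

lemma restrict_of_disjoint {t : BTree X} {A : Finset X} (h : Disjoint t.leaves A) :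
    t.restrict A = none := by
  induction t with
  | leaf x =>
      have : x ∉ A := Finset.disjoint_left.mp h (by simp [leaves, seq])
      simp [restrict, this]
  | node l r ihl ihr =>
      rw [leaves_node, Finset.disjoint_union_left] at h
      simp only [restrict, ihl h.1, ihr h.2]

lemma restrict_node_left {l r : BTree X} {A : Finset X} (h : r.restrict A = none) :
    (node l r).restrict A = l.restrict A := by
  simp only [restrict, h]
  cases l.restrict A <;> rfl

lemma restrict_node_right {l r : BTree X} {A : Finset X} (h : l.restrict A = none) :
    (node l r).restrict A = r.restrict A := by
  simp only [restrict, h]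
  cases r.restrict A <;> rfl

lemma lcaPos_node_left {l r : BTree X} {A : Finset X} (hl : A ⊆ l.leaves) :
    lcaPos (node l r) A = false :: lcaPos l A := by
  simp [lcaPos, hl]

lemma lcaPos_node_right {l r : BTree X} {A : Finset X}
    (hnl : ¬ A ⊆ l.leaves) (hr : A ⊆ r.leaves) :
    lcaPos (node l r) A = true :: lcaPos r A := by
  simp [lcaPos, hnl, hr]

lemma lcaPos_cases {l r : BTree X} {A : Finset X}
    (h : lcaPos (node l r) A ≠ []) : A ⊆ l.leaves ∨ A ⊆ r.leaves := by
  by_contra hc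
  push_neg at hc
  simp [lcaPos, hc.1, hc.2] at h

lemma Incomp.left_ne_nil {p q : List Bool} (h : Incomp p q) : p ≠ [] :=
  fun e => h.1 (e ▸ List.nil_prefix)

lemma Incomp.right_ne_nil {p q : List Bool} (h : Incomp p q) : q ≠ [] :=
  fun e => h.2 (e ▸ List.nil_prefix)

lemma incomp_of_cons {b : Bool} {p q : List Bool} (h : Incomp (b :: p) (b :: q)) :
    Incomp p q :=
  ⟨fun hp => h.1 (List.cons_prefix_cons.mpr ⟨rfl, hp⟩),
   fun hq => h.2 (List.cons_prefix_cons.mpr ⟨rfl, hq⟩)⟩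

lemma subset_foldr {P : List (Finset X)} {p : Finset X} (h : p ∈ P) :
    p ⊆ P.foldr (· ∪ ·) ∅ := by
  induction P with
  | nil => simp at h
  | cons a P ih =>
      rcases List.mem_cons.mp h with rfl | h
      · exact Finset.subset_union_left
      · exact (ih h).trans Finset.subset_union_right

lemma foldr_subset {P : List (Finset X)} {S : Finset X} (h : ∀ p ∈ P, p ⊆ S) :
    P.foldr (· ∪ ·) ∅ ⊆ S := by
  induction P with
  | nil => simp
  | cons a P ih =>
      exact Finset.union_subset (h a (by simp)) (ih fun p hp => h p (by simp [hp]))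

lemma disjoint_foldr {P : List (Finset X)} {A : Finset X} (h : ∀ p ∈ P, Disjoint A p) :
    Disjoint A (P.foldr (· ∪ ·) ∅) := by
  induction P with
  | nil => simp
  | cons a P ih =>
      exact Finset.disjoint_union_right.mpr
        ⟨h a (by simp), ih fun p hp => h p (by simp [hp])⟩

lemma foldr_nonempty {P : List (Finset X)} (hP : P ≠ []) (h : ∀ p ∈ P, p.Nonempty) :
    (P.foldr (· ∪ ·) ∅).Nonempty := by
  cases P with
  | nil => exact absurd rfl hP
  | cons a P =>
      exact Finset.Nonempty.mono Finset.subset_union_left (h a (by simp))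

lemma eq_of_cover {l r : BTree X} {A B : Finset X}
    (hdlr : Disjoint l.leaves r.leaves)
    (hcov : A ∪ B = l.leaves ∪ r.leaves)
    (hA : A ⊆ l.leaves) (hB : B ⊆ r.leaves) :
    l.leaves = A ∧ r.leaves = B := by
  constructor
  · refine Finset.Subset.antisymm (fun x hx => ?_) hA
    have hx' : x ∈ A ∪ B := by rw [hcov]; exact Finset.mem_union_left _ hx
    rcases Finset.mem_union.mp hx' with h | h
    · exact h
    · exact absurd (hB h) (Finset.disjoint_left.mp hdlr hx)
  · refine Finset.Subset.antisymm (fun x hx => ?_) hB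
    have hx' : x ∈ A ∪ B := by rw [hcov]; exact Finset.mem_union_right _ hx
    rcases Finset.mem_union.mp hx' with h | h
    · exact absurd (hA h) (Finset.disjoint_right.mp hdlr hx)
    · exact h

lemma split_tree (t : BTree X) (A B : Finset X) (ht : t.Phylo)
    (hA : A.Nonempty) (hB : B.Nonempty) (hAB : Disjoint A B)
    (hcov : A ∪ B = t.leaves)
    (hinc : Incomp (lcaPos t A) (lcaPos t B)) :
    ∃ tA tB b, tA.leaves = A ∧ tB.leaves = B ∧ tA.Phylo ∧ tB.Phylo ∧
      (t = node tA tB ∨ t = node tB tA) ∧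
      (∀ C : Finset X, C ⊆ A → t.restrict C = tA.restrict C) ∧
      (∀ C : Finset X, C ⊆ B → t.restrict C = tB.restrict C) ∧
      (∀ C : Finset X, C.Nonempty → C ⊆ B → lcaPos t C = b :: lcaPos tB C) := by
  cases t with
  | leaf x => simp [Incomp, lcaPos] at hinc
  | node l r =>
      obtain ⟨hl, hr, hdlr⟩ := phylo_node ht
      rw [leaves_node] at hcov
      have hAside := lcaPos_cases hinc.left_ne_nil
      have hBside := lcaPos_cases hinc.right_ne_nil
      have hnot_same_l : ¬ (A ⊆ l.leaves ∧ B ⊆ l.leaves) := by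
        rintro ⟨h1, h2⟩
        obtain ⟨y, hy⟩ := leaves_nonempty r
        have : y ∈ A ∪ B := by
          rw [hcov]; exact Finset.mem_union_right _ hy
        have : y ∈ l.leaves := by
          rcases Finset.mem_union.mp this with h | h
          · exact h1 h
          · exact h2 h
        exact Finset.disjoint_left.mp hdlr this hy
      have hnot_same_r : ¬ (A ⊆ r.leaves ∧ B ⊆ r.leaves) := by
        rintro ⟨h1, h2⟩
        obtain ⟨y, hy⟩ := leaves_nonempty l
        have : y ∈ A ∪ B := by
          rw [hcov]; exact Finset.mem_union_left _ hy
        have : y ∈ r.leaves := by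
          rcases Finset.mem_union.mp this with h | h
          · exact h1 h
          · exact h2 h
        exact Finset.disjoint_left.mp hdlr hy this
      rcases hAside with hAl | hAr
      · -- A on the left
        have hBr : B ⊆ r.leaves := by
          rcases hBside with hBl | hBr
          · exact absurd ⟨hAl, hBl⟩ hnot_same_l
          · exact hBr
        obtain ⟨heqL, heqR⟩ := eq_of_cover hdlr hcov hAl hBr
        refine ⟨l, r, true, heqL, heqR, hl, hr, Or.inl rfl, ?_, ?_, ?_⟩
        · intro C hC
          exact restrict_node_left (restrict_of_disjoint
            (Finset.disjoint_left.mpr fun x hx hxC =>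
              Finset.disjoint_left.mp hAB (hC hxC) (heqR ▸ hx)))
        · intro C hC
          exact restrict_node_right (restrict_of_disjoint
            (Finset.disjoint_left.mpr fun x hx hxC =>
              Finset.disjoint_left.mp hAB (heqL ▸ hx) (hC hxC)))
        · intro C hCne hC
          refine lcaPos_node_right (fun hCl => ?_) (heqR ▸ hC)
          obtain ⟨y, hy⟩ := hCne
          exact Finset.disjoint_left.mp hAB (heqL ▸ hCl hy) (hC hy)
      · -- A on the right
        have hBl : B ⊆ l.leaves := by
          rcases hBside with hBl | hBr
          · exact hBl
          · exact absurd ⟨hAr, hBr⟩ hnot_same_r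
        obtain ⟨heqL, heqR⟩ := eq_of_cover hdlr (by rw [Finset.union_comm]; exact hcov) hBl hAr
        refine ⟨r, l, false, heqR, heqL, hr, hl, Or.inr rfl, ?_, ?_, ?_⟩
        · intro C hC
          exact restrict_node_right (restrict_of_disjoint
            (Finset.disjoint_left.mpr fun x hx hxC =>
              Finset.disjoint_left.mp hAB (hC hxC) (heqL ▸ hx)))
        · intro C hC
          exact restrict_node_left (restrict_of_disjoint
            (Finset.disjoint_left.mpr fun x hx hxC =>
              Finset.disjoint_left.mp hAB (heqR ▸ hx) (hC hxC)))
        · intro C hCne hC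
          exact lcaPos_node_left (heqL ▸ hC)

end BTree

open BTree

/-- Gluing agreement along an incomparable ordered partition (Observation 3):
if `(X_1, …, X_p)` is an ordered partition of the common leaf set of rooted
binary trees `t` and `s` such that in both trees `lca(X_i)` is incomparable with
`lca(X_{i+1} ∪ ⋯ ∪ X_p)` for every `i < p`, and `t|X_i = s|X_i` for all `i`, then
`t = s`. -/
theorem glue_agreement_along_incomparable_partition {X : Type} [DecidableEq X]
    (t s : BTree X) (ht : t.Phylo) (hs : s.Phylo) (hls : t.leaves = s.leaves)
    (P : List (Finset X))
    (hne : ∀ p ∈ P, p.Nonempty)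
    (hdisj : P.Pairwise Disjoint)
    (hcov : P.foldr (· ∪ ·) ∅ = t.leaves)
    (hT : ∀ i (h : i + 1 < P.length),
      Incomp (lcaPos t (P.get ⟨i, Nat.lt_of_succ_lt h⟩))
        (lcaPos t ((P.drop (i + 1)).foldr (· ∪ ·) ∅)))
    (hS : ∀ i (h : i + 1 < P.length),
      Incomp (lcaPos s (P.get ⟨i, Nat.lt_of_succ_lt h⟩))
        (lcaPos s ((P.drop (i + 1)).foldr (· ∪ ·) ∅)))
    (hres : ∀ p ∈ P, RAgree t s p) :
    REq t s := by
  induction P generalizing t s with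
  | nil =>
      exfalso
      have hne' := leaves_nonempty t
      rw [← hcov] at hne'
      simp at hne'
  | cons A Ps ih =>
      cases Ps with
      | nil =>
          have hA : A = t.leaves := by simpa using hcov
          obtain ⟨t', s', ht', hs', he⟩ := hres A (by simp)
          rw [restrict_of_subset (by rw [hA])] at ht'
          rw [restrict_of_subset (by rw [← hls, ← hA])] at hs'
          cases ht'; cases hs'
          exact he
      | cons B rest =>
          set Bu : Finset X := (B :: rest).foldr (· ∪ ·) ∅ with hBu
          have hAne : A.Nonempty := hne A (by simp)
          have hBune : Bu.Nonempty :=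
            foldr_nonempty (by simp) (fun p hp => hne p (by simp [hp]))
          have hdisjA : ∀ p ∈ B :: rest, Disjoint A p := (List.pairwise_cons.mp hdisj).1
          have hABu : Disjoint A Bu := disjoint_foldr hdisjA
          have hcovT : A ∪ Bu = t.leaves := hcov
          have hcovS : A ∪ Bu = s.leaves := by rw [← hls]; exact hcov
          have hT0 : Incomp (lcaPos t A) (lcaPos t Bu) :=
            hT 0 (by simp)
          have hS0 : Incomp (lcaPos s A) (lcaPos s Bu) :=
            hS 0 (by simp)
          obtain ⟨tA, tB, bt, htA, htB, hPtA, hPtB, htshape, hresA_t, hresB_t, hlca_t⟩ :=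
            split_tree t A Bu ht hAne hBune hABu hcovT hT0
          obtain ⟨sA, sB, bs, hsA, hsB, hPsA, hPsB, hsshape, hresA_s, hresB_s, hlca_s⟩ :=
            split_tree s A Bu hs hAne hBune hABu hcovS hS0
          -- agreement on the A-parts
          have heA : REq tA sA := by
            obtain ⟨t', s', ht', hs', he⟩ := hres A (by simp)
            rw [hresA_t A Finset.Subset.rfl, restrict_of_subset (by rw [htA])] at ht'
            rw [hresA_s A Finset.Subset.rfl, restrict_of_subset (by rw [hsA])] at hs'
            cases ht'; cases hs'
            exact he
          -- agreement on the B-parts, via the induction hypothesis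
          have hmem : ∀ p ∈ B :: rest, p ⊆ Bu := fun p hp => subset_foldr hp
          have heB : REq tB sB := by
            refine ih tB sB hPtB hPsB (htB.trans hsB.symm)
              (fun p hp => hne p (by simp [hp]))
              (List.pairwise_cons.mp hdisj).2
              htB.symm ?_ ?_ ?_
            · intro i h
              have h2 : i + 1 + 1 < (A :: B :: rest).length := by
                simpa using Nat.succ_lt_succ h
              have hTi := hT (i + 1) h2
              have hgm : (B :: rest).get ⟨i, Nat.lt_of_succ_lt h⟩ ∈ B :: rest :=
                List.get_mem _ _
              have hC1ne : ((B :: rest).get ⟨i, Nat.lt_of_succ_lt h⟩).Nonempty :=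
                hne _ (by simp [hgm])
              have hC1 : (B :: rest).get ⟨i, Nat.lt_of_succ_lt h⟩ ⊆ Bu :=
                subset_foldr hgm
              have hdropne : (B :: rest).drop (i + 1) ≠ [] := by
                intro hnil
                rw [List.drop_eq_nil_iff] at hnil
                omega
              have hC2ne : (((B :: rest).drop (i + 1)).foldr (· ∪ ·) ∅).Nonempty :=
                foldr_nonempty hdropne
                  (fun p hp => hne p (by simp [List.mem_of_mem_drop hp]))
              have hC2 : ((B :: rest).drop (i + 1)).foldr (· ∪ ·) ∅ ⊆ Bu :=
                foldr_subset (fun p hp => subset_foldr (List.mem_of_mem_drop hp))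
              have hTi' : Incomp (lcaPos t ((B :: rest).get ⟨i, Nat.lt_of_succ_lt h⟩))
                  (lcaPos t (((B :: rest).drop (i + 1)).foldr (· ∪ ·) ∅)) := hTi
              rw [hlca_t _ hC1ne hC1, hlca_t _ hC2ne hC2] at hTi'
              exact incomp_of_cons hTi'
            · intro i h
              have h2 : i + 1 + 1 < (A :: B :: rest).length := by
                simpa using Nat.succ_lt_succ h
              have hSi := hS (i + 1) h2
              have hgm : (B :: rest).get ⟨i, Nat.lt_of_succ_lt h⟩ ∈ B :: rest :=
                List.get_mem _ _
              have hC1ne : ((B :: rest).get ⟨i, Nat.lt_of_succ_lt h⟩).Nonempty :=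
                hne _ (by simp [hgm])
              have hC1 : (B :: rest).get ⟨i, Nat.lt_of_succ_lt h⟩ ⊆ Bu :=
                subset_foldr hgm
              have hdropne : (B :: rest).drop (i + 1) ≠ [] := by
                intro hnil
                rw [List.drop_eq_nil_iff] at hnil
                omega
              have hC2ne : (((B :: rest).drop (i + 1)).foldr (· ∪ ·) ∅).Nonempty :=
                foldr_nonempty hdropne
                  (fun p hp => hne p (by simp [List.mem_of_mem_drop hp]))
              have hC2 : ((B :: rest).drop (i + 1)).foldr (· ∪ ·) ∅ ⊆ Bu :=
                foldr_subset (fun p hp => subset_foldr (List.mem_of_mem_drop hp))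
              have hSi' : Incomp (lcaPos s ((B :: rest).get ⟨i, Nat.lt_of_succ_lt h⟩))
                  (lcaPos s (((B :: rest).drop (i + 1)).foldr (· ∪ ·) ∅)) := hSi
              rw [hlca_s _ hC1ne hC1, hlca_s _ hC2ne hC2] at hSi'
              exact incomp_of_cons hSi'
            · intro p hp
              obtain ⟨t', s', ht', hs', he⟩ := hres p (by simp [hp])
              exact ⟨t', s', by rw [← hresB_t p (hmem p hp)]; exact ht',
                by rw [← hresB_s p (hmem p hp)]; exact hs', he⟩
          rcases htshape with rfl | rfl <;> rcases hsshape with rfl | rfl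
          · exact Or.inl ⟨heA, heB⟩
          · exact Or.inr ⟨heA, heB⟩
          · exact Or.inr ⟨heB, heA⟩
          · exact Or.inl ⟨heB, heA⟩
end

section
/- Let T' and S' be rooted binary trees with the same leaf set X (|X| = N ≥ 2) and identical left-to-right leaf orderings, and suppose the left subtree of T' is at least as large as its right subtree. Then, for any constant C ≥ 4, at least one of the following holds: (i) there exist a node u of T', a node v of S', and a leaf x ∈ X with x ∉ Le(T'_u), x ∉ Le(S'_v), and |Le(T'_u) ∩ Le(S'_v)| ≥ N/C; or (ii) every subtree hanging off the path from the left-most leaf to the root of T', and every subtree hanging off the path from the root to the right-most leaf of S', has at most max(2N/C, 1) leaves. -/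
open BTree

set_option linter.unusedSectionVars false
set_option linter.unusedVariables false

section Aux
variable {X : Type} [DecidableEq X]

lemma seq_node (l r : BTree X) : (BTree.node l r).seq = l.seq ++ r.seq := rfl

lemma size_node' (l r : BTree X) : (BTree.node l r).size = l.size + r.size := by
  simp [BTree.size, seq_node]

lemma size_pos' (t : BTree X) : 1 ≤ t.size := by
  induction t with
  | leaf x => simp [BTree.size, BTree.seq]
  | node l r ihl ihr => rw [size_node']; omega

lemma cast_sub_ge (a b : ℕ) : (a:ℝ) - (b:ℝ) ≤ ((a - b : ℕ):ℝ) := by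
  rcases le_or_gt b a with h | h
  · rw [Nat.cast_sub h]
  · have h1 : a - b = 0 := by omega
    have h2 : (a:ℝ) ≤ (b:ℝ) := by exact_mod_cast h.le
    rw [h1]; push_cast; linarith

lemma mem_interval_toFinset {L : List X} (hL : L.Nodup) {lo n i : ℕ} (hi : i < L.length)
    (h : L[i] ∈ ((L.drop lo).take n).toFinset) : lo ≤ i ∧ i < lo + n := by
  rw [List.mem_toFinset] at h
  obtain ⟨j, hj, hval⟩ := List.mem_iff_getElem.mp h
  rw [List.length_take, List.length_drop] at hj
  simp only [List.getElem_take, List.getElem_drop] at hval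
  have := (List.Nodup.getElem_inj_iff hL).mp hval
  omega

lemma interval_sublist (L : List X) {lo m k hi : ℕ} (h1 : lo ≤ m) (h2 : k ≤ hi) (h3 : m ≤ hi) :
    ((L.drop m).take (k - m)).Sublist ((L.drop lo).take (hi - lo)) := by
  have e1 : L.drop m = (L.drop lo).drop (m - lo) := by
    rw [List.drop_drop]; congr 1; omega
  rw [e1]
  have e2 : (((L.drop lo).drop (m - lo)).take (k - m)).Sublist
      (((L.drop lo).drop (m - lo)).take (hi - m)) := by
    have h := List.take_sublist (k - m) (((L.drop lo).drop (m - lo)).take (hi - m))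
    rwa [List.take_take, min_eq_left (by omega)] at h
  refine e2.trans ?_
  have e3 : ((L.drop lo).take (hi - lo)).drop (m - lo) =
      ((L.drop lo).drop (m - lo)).take (hi - m) := by
    rw [List.drop_take]; congr 1; omega
  rw [← e3]; exact List.drop_sublist _ _

lemma inter_card_ge {L : List X} (hL : L.Nodup) {u v : BTree X} {lo1 hi1 lo2 hi2 : ℕ}
    (h1 : u.seq = (L.drop lo1).take (hi1 - lo1)) (h2 : v.seq = (L.drop lo2).take (hi2 - lo2))
    (hk : min hi1 hi2 ≤ L.length) :
    min hi1 hi2 - max lo1 lo2 ≤ (u.leaves ∩ v.leaves).card := by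
  rcases le_or_gt (min hi1 hi2) (max lo1 lo2) with h | h
  · simp [Nat.sub_eq_zero_of_le h]
  · set m := max lo1 lo2 with hm
    set k := min hi1 hi2 with hkk
    set W := (L.drop m).take (k - m) with hW
    have hs1 : W.Sublist u.seq := by
      rw [h1]; exact interval_sublist L (le_max_left _ _) (min_le_left _ _) (by omega)
    have hs2 : W.Sublist v.seq := by
      rw [h2]; exact interval_sublist L (le_max_right _ _) (min_le_right _ _) (by omega)
    have hWL : W.Sublist L := ((List.take_sublist _ _).trans (List.drop_sublist _ _))
    have hWnd : W.Nodup := hWL.nodup hL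
    have hlen : W.length = k - m := by
      rw [hW, List.length_take, List.length_drop]; omega
    have hsub : W.toFinset ⊆ u.leaves ∩ v.leaves := by
      intro x hx
      rw [List.mem_toFinset] at hx
      exact Finset.mem_inter.mpr
        ⟨List.mem_toFinset.mpr (hs1.subset hx), List.mem_toFinset.mpr (hs2.subset hx)⟩
    calc k - m = W.toFinset.card := by rw [List.toFinset_card_of_nodup hWnd, hlen]
    _ ≤ _ := Finset.card_le_card hsub

end Aux

section Aux2
variable {X : Type} [DecidableEq X]

lemma subtreeAt_single_false (l r : BTree X) :
    (BTree.node l r).subtreeAt [false] = some l := by simp [BTree.subtreeAt]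

lemma subtreeAt_single_true (l r : BTree X) :
    (BTree.node l r).subtreeAt [true] = some r := by simp [BTree.subtreeAt]

lemma subtreeAt_cons_false (l r : BTree X) (p : List Bool) :
    (BTree.node l r).subtreeAt (false :: p) = l.subtreeAt p := by simp [BTree.subtreeAt]

lemma subtreeAt_cons_true (l r : BTree X) (p : List Bool) :
    (BTree.node l r).subtreeAt (true :: p) = r.subtreeAt p := by simp [BTree.subtreeAt]

lemma build {t s : BTree X} (htn : t.seq.Nodup) (hseq2 : s.seq = t.seq) (C : ℝ)
    {pu pv : List Bool} {u v : BTree X} {lo1 hi1 lo2 hi2 i : ℕ}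
    (hu : t.subtreeAt pu = some u) (hv : s.subtreeAt pv = some v)
    (h1 : u.seq = (t.seq.drop lo1).take (hi1 - lo1))
    (h2 : v.seq = (t.seq.drop lo2).take (hi2 - lo2))
    (hiL : i < t.seq.length)
    (hx1 : ¬(lo1 ≤ i ∧ i < hi1)) (hx2 : ¬(lo2 ≤ i ∧ i < hi2))
    (hk : min hi1 hi2 ≤ t.seq.length)
    (hcard : (t.leaves.card : ℝ) / C ≤ ((min hi1 hi2 - max lo1 lo2 : ℕ) : ℝ)) :
    ∃ (pu pv : List Bool) (u v : BTree X) (x : X),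
      t.subtreeAt pu = some u ∧ s.subtreeAt pv = some v ∧
      x ∈ t.leaves ∧ x ∉ u.leaves ∧ x ∉ v.leaves ∧
      (t.leaves.card : ℝ) / C ≤ ((u.leaves ∩ v.leaves).card : ℝ) := by
  refine ⟨pu, pv, u, v, t.seq[i], hu, hv, ?_, ?_, ?_, ?_⟩
  · exact List.mem_toFinset.mpr (List.getElem_mem hiL)
  · intro hmem
    have hmem' : t.seq[i] ∈ ((t.seq.drop lo1).take (hi1 - lo1)).toFinset := by
      rw [← h1]; exact hmem
    have := mem_interval_toFinset htn hiL hmem'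
    omega
  · intro hmem
    have hmem' : t.seq[i] ∈ ((t.seq.drop lo2).take (hi2 - lo2)).toFinset := by
      rw [← h2]; exact hmem
    have := mem_interval_toFinset htn hiL hmem'
    omega
  · refine le_trans hcard ?_
    exact_mod_cast inter_card_ge htn h1 h2 hk

lemma prefix_chain (t : BTree X) : ∀ (θ : ℝ) (M : ℕ), 1 ≤ θ → θ ≤ (M:ℝ) → M < t.size →
    ∃ (ad : List Bool) (u : BTree X) (lo hi : ℕ),
      t.subtreeAt ad = some u ∧ u.seq = (t.seq.drop lo).take (hi - lo) ∧
      lo ≤ hi ∧ hi ≤ t.size ∧ θ ≤ (hi:ℝ) ∧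
      ((lo = 0 ∧ hi ≤ M) ∨ (1 ≤ lo ∧ (lo:ℝ) < θ ∧ M < hi)) := by
  induction t with
  | leaf x =>
    intro θ M h1 h2 h3
    exfalso
    have hM : M = 0 := by
      have : (BTree.leaf x : BTree X).size = 1 := rfl
      omega
    rw [hM] at h2; push_cast at h2; linarith
  | node l r ihl ihr =>
    intro θ M h1 h2 h3
    rcases le_or_gt θ ((l.size : ℕ):ℝ) with ha | ha
    · rcases le_or_gt l.size M with hb | hb
      · refine ⟨[false], l, 0, l.size, subtreeAt_single_false l r, ?_, Nat.zero_le _, ?_, ha,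
          Or.inl ⟨rfl, hb⟩⟩
        · rw [seq_node, List.drop_zero, Nat.sub_zero]
          exact (List.take_left' rfl).symm
        · rw [size_node']; omega
      · obtain ⟨ad, u, lo, hi, g1, g2, g3, g4, g5, g6⟩ := ihl θ M h1 h2 hb
        refine ⟨false :: ad, u, lo, hi, by rw [subtreeAt_cons_false]; exact g1, ?_, g3, ?_, g5, g6⟩
        · rw [g2, seq_node,
            List.drop_append_of_le_length (show lo ≤ l.seq.length from by
              have : l.size = l.seq.length := rfl; omega),
            List.take_append_of_le_length (by
              rw [List.length_drop]
              have : l.size = l.seq.length := rfl; omega)]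
        · rw [size_node']; omega
    · refine ⟨[true], r, l.size, (BTree.node l r).size, subtreeAt_single_true l r, ?_, ?_,
        le_rfl, ?_, Or.inr ⟨size_pos' l, ha, h3⟩⟩
      · rw [seq_node, size_node', show l.size + r.size - l.size = r.size from by omega]
        have e : (l.seq ++ r.seq).drop l.size = r.seq := (List.drop_left (l₁ := l.seq) (l₂ := r.seq))
        have e2 : r.seq.take r.size = r.seq := (List.take_length (l := r.seq))
        rw [e, e2]
      · rw [size_node']; omega
      · have : (M:ℝ) < ((BTree.node l r).size : ℕ) := by exact_mod_cast h3
        linarith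

lemma suffix_chain (s : BTree X) : ∀ (θ : ℝ) (M : ℕ), 1 ≤ M → (M:ℝ) ≤ θ →
    θ ≤ (s.size:ℝ) - 1 →
    ∃ (ad : List Bool) (v : BTree X) (lo hi : ℕ),
      s.subtreeAt ad = some v ∧ v.seq = (s.seq.drop lo).take (hi - lo) ∧
      lo ≤ hi ∧ hi ≤ s.size ∧ (lo:ℝ) ≤ θ ∧
      ((hi = s.size ∧ M ≤ lo) ∨ (hi + 1 ≤ s.size ∧ θ < (hi:ℝ) ∧ lo < M)) := by
  induction s with
  | leaf x =>
    intro θ M h1 h2 h3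
    exfalso
    have hs : (BTree.leaf x : BTree X).size = 1 := rfl
    rw [hs] at h3
    have : (1:ℝ) ≤ M := by exact_mod_cast h1
    push_cast at h3; linarith
  | node l r ihl ihr =>
    intro θ M h1 h2 h3
    rcases le_or_gt ((l.size : ℕ):ℝ) θ with ha | ha
    · rcases le_or_gt M l.size with hb | hb
      · refine ⟨[true], r, l.size, (BTree.node l r).size, subtreeAt_single_true l r, ?_, ?_,
          le_rfl, ha, Or.inl ⟨rfl, hb⟩⟩
        · rw [seq_node, size_node', show l.size + r.size - l.size = r.size from by omega]
          have e : (l.seq ++ r.seq).drop l.size = r.seq := (List.drop_left (l₁ := l.seq) (l₂ := r.seq))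
          have e2 : r.seq.take r.size = r.seq := (List.take_length (l := r.seq))
          rw [e, e2]
        · rw [size_node']; omega
      · have hr1 : 1 ≤ M - l.size := by omega
        have hr2 : ((M - l.size : ℕ):ℝ) ≤ θ - l.size := by
          rw [Nat.cast_sub (by omega)]; linarith
        have hr3 : θ - l.size ≤ (r.size:ℝ) - 1 := by
          have hss : ((BTree.node l r).size : ℝ) = (l.size:ℝ) + (r.size:ℝ) := by
            rw [size_node']; push_cast; ring
          linarith
        obtain ⟨ad, v, lo, hi, g1, g2, g3, g4, g5, g6⟩ := ihr (θ - l.size) (M - l.size) hr1 hr2 hr3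
        refine ⟨true :: ad, v, l.size + lo, l.size + hi,
          by rw [subtreeAt_cons_true]; exact g1, ?_, by omega, ?_, ?_, ?_⟩
        · rw [g2, seq_node, show l.size + hi - (l.size + lo) = hi - lo from by omega]
          congr 1
          have e : (l.seq ++ r.seq).drop l.size = r.seq := (List.drop_left (l₁ := l.seq) (l₂ := r.seq))
          rw [← List.drop_drop, e]
        · rw [size_node']; omega
        · push_cast; linarith
        · rcases g6 with ⟨e1, e2⟩ | ⟨e1, e2, e3⟩
          · exact Or.inl ⟨by rw [size_node']; omega, by omega⟩
          · refine Or.inr ⟨by rw [size_node']; omega, ?_, by omega⟩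
            push_cast; linarith
    · refine ⟨[false], l, 0, l.size, subtreeAt_single_false l r, ?_, Nat.zero_le _, ?_, ?_,
        Or.inr ⟨?_, ha, by omega⟩⟩
      · rw [seq_node, List.drop_zero, Nat.sub_zero]
        exact (List.take_left' rfl).symm
      · rw [size_node']; omega
      · have h1' : (1:ℝ) ≤ M := by exact_mod_cast h1
        push_cast
        linarith
      · rw [size_node']
        have := size_pos' r; omega

lemma leftSpine_interval (t : BTree X) : ∀ q ∈ t.leftSpine, ∃ (ad : List Bool) (lo : ℕ),
    t.subtreeAt ad = some q ∧ q.seq = (t.seq.drop lo).take q.size ∧ lo + q.size ≤ t.size ∧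
    (lo = 0 → q.size = 1) := by
  induction t with
  | leaf x =>
    intro q hq
    simp only [BTree.leftSpine, List.mem_singleton] at hq
    subst hq
    exact ⟨[], 0, rfl, by simp [BTree.seq, BTree.size], by simp [BTree.size], fun _ => rfl⟩
  | node l r ihl ihr =>
    intro q hq
    rw [show (BTree.node l r).leftSpine = l.leftSpine ++ [r] from rfl, List.mem_append,
      List.mem_singleton] at hq
    rcases hq with hq | hq
    · obtain ⟨ad, lo, g1, g2, g3, g4⟩ := ihl q hq
      refine ⟨false :: ad, lo, by rw [subtreeAt_cons_false]; exact g1, ?_, ?_, g4⟩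
      · rw [g2, seq_node,
          List.drop_append_of_le_length (show lo ≤ l.seq.length from by
            have : l.size = l.seq.length := rfl; omega),
          List.take_append_of_le_length (by
            rw [List.length_drop]
            have : l.size = l.seq.length := rfl; omega)]
      · rw [size_node']; omega
    · subst hq
      refine ⟨[true], l.size, subtreeAt_single_true l q, ?_, le_of_eq (size_node' l q).symm, ?_⟩
      · rw [seq_node]
        have e : (l.seq ++ q.seq).drop l.size = q.seq := (List.drop_left (l₁ := l.seq) (l₂ := q.seq))
        rw [e]
        exact ((List.take_length (l := q.seq))).symm
      · intro h0
        have := size_pos' l; omega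

lemma rightSpine_interval (t : BTree X) : ∀ q ∈ t.rightSpine, ∃ (ad : List Bool) (lo : ℕ),
    t.subtreeAt ad = some q ∧ q.seq = (t.seq.drop lo).take q.size ∧ lo + q.size ≤ t.size ∧
    (lo + q.size = t.size → q.size = 1) := by
  induction t with
  | leaf x =>
    intro q hq
    simp only [BTree.rightSpine, List.mem_singleton] at hq
    subst hq
    exact ⟨[], 0, rfl, by simp [BTree.seq, BTree.size], by simp [BTree.size], fun _ => rfl⟩
  | node l r ihl ihr =>
    intro q hq
    rw [show (BTree.node l r).rightSpine = l :: r.rightSpine from rfl, List.mem_cons] at hq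
    rcases hq with hq | hq
    · subst hq
      refine ⟨[false], 0, by simp [BTree.subtreeAt], ?_, ?_, ?_⟩
      · rw [seq_node, List.drop_zero]
        exact (List.take_left' rfl).symm
      · rw [size_node']; omega
      · rw [size_node']
        have := size_pos' r; omega
    · obtain ⟨ad, lo, g1, g2, g3, g4⟩ := ihr q hq
      refine ⟨true :: ad, l.size + lo, by rw [subtreeAt_cons_true]; exact g1, ?_, ?_, ?_⟩
      · rw [g2, seq_node]
        congr 1
        have e : (l.seq ++ r.seq).drop l.size = r.seq := (List.drop_left (l₁ := l.seq) (l₂ := r.seq))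
        rw [← List.drop_drop, e]
      · rw [size_node']; omega
      · rw [size_node']; omega

end Aux2


set_option maxHeartbeats 1000000 in


/-- Lemma 3: let `t = node tl tr` and `s` be rooted binary trees on the same leaf
set of size `N ≥ 2` with identical pre-order leaf orderings, with the left
subtree of `t` at least as large as its right subtree, and let `C ≥ 4`.  Then
either (i) there are subtrees `u` of `t` and `v` of `s` and a leaf `x` outside
both with `|leaves(u) ∩ leaves(v)| ≥ N/C`, or (ii) every subtree hanging off the
left spine of `t` or the right spine of `s` has at most `max(2N/C, 1)` leaves. -/
theorem spine_dichotomy {X : Type} [DecidableEq X]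
    (t s tl tr : BTree X) (ht : t.Phylo) (hs : s.Phylo) (hseq : t.seq = s.seq)
    (htn : t = BTree.node tl tr) (hbal : tr.size ≤ tl.size)
    (hN : 2 ≤ t.leaves.card) (C : ℝ) (hC : 4 ≤ C) :
    (∃ (pu pv : List Bool) (u v : BTree X) (x : X),
      t.subtreeAt pu = some u ∧ s.subtreeAt pv = some v ∧
      x ∈ t.leaves ∧ x ∉ u.leaves ∧ x ∉ v.leaves ∧
      (t.leaves.card : ℝ) / C ≤ ((u.leaves ∩ v.leaves).card : ℝ)) ∨
    (∀ q ∈ t.leftSpine ++ s.rightSpine,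
      (q.leaves.card : ℝ) ≤ max (2 * (t.leaves.card : ℝ) / C) 1) := by
  subst htn
  have hCpos : (0:ℝ) < C := by linarith
  obtain ⟨sl, sr, rfl⟩ : ∃ sl sr, s = BTree.node sl sr := by
    cases s with
    | leaf y =>
      exfalso
      have hl := congrArg List.length hseq
      have h1 : (BTree.leaf y : BTree X).seq.length = 1 := rfl
      have hN' : (BTree.node tl tr).leaves.card = (BTree.node tl tr).seq.length :=
        List.toFinset_card_of_nodup ht
      omega
    | node a b => exact ⟨a, b, rfl⟩
  set N := (BTree.node tl tr).seq.length with hNdef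
  have hnd : (BTree.node tl tr).seq.Nodup := ht
  have hNcard : (BTree.node tl tr).leaves.card = N := List.toFinset_card_of_nodup ht
  have hN2 : 2 ≤ N := hNcard ▸ hN
  have hNsum : tl.size + tr.size = N := by
    rw [hNdef, seq_node, List.length_append]; rfl
  have hSsum : sl.size + sr.size = N := by
    rw [hNdef, hseq, seq_node, List.length_append]; rfl
  have htlpos := size_pos' tl
  have htrpos := size_pos' tr
  have hslpos := size_pos' sl
  have hsrpos := size_pos' sr
  have hszt : (BTree.node tl tr).size = N := by rw [hNdef]; rfl
  have hsz2 : (BTree.node sl sr).size = N := by rw [hNdef, hseq]; rfl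
  have e_tl : tl.seq = ((BTree.node tl tr).seq.drop 0).take (tl.size - 0) := by
    rw [seq_node, List.drop_zero, Nat.sub_zero]
    exact (List.take_left' rfl).symm
  have e_tr : tr.seq = ((BTree.node tl tr).seq.drop tl.size).take (N - tl.size) := by
    rw [show N - tl.size = tr.size from by omega, seq_node]
    have e : (tl.seq ++ tr.seq).drop tl.size = tr.seq := (List.drop_left (l₁ := tl.seq) (l₂ := tr.seq))
    rw [e]
    exact ((List.take_length (l := tr.seq))).symm
  have e_sl : sl.seq = ((BTree.node tl tr).seq.drop 0).take (sl.size - 0) := by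
    rw [hseq, seq_node, List.drop_zero, Nat.sub_zero]
    exact (List.take_left' rfl).symm
  have e_sr : sr.seq = ((BTree.node tl tr).seq.drop sl.size).take (N - sl.size) := by
    rw [show N - sl.size = sr.size from by omega, hseq, seq_node]
    have e : (sl.seq ++ sr.seq).drop sl.size = sr.seq := (List.drop_left (l₁ := sl.seq) (l₂ := sr.seq))
    rw [e]
    exact ((List.take_length (l := sr.seq))).symm
  by_cases h0 : (N:ℝ) ≤ (sl.size:ℝ) * C
  · left
    have h2p : (N:ℝ) ≤ 2 * (tl.size:ℝ) := by exact_mod_cast (by omega : N ≤ 2 * tl.size)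
    refine build ht hseq.symm C (subtreeAt_single_false tl tr) (subtreeAt_single_false sl sr)
      e_tl e_sl (i := N - 1) (by omega) (by omega) (by omega) (by omega) ?_
    rw [hNcard, div_le_iff₀ hCpos, show min tl.size sl.size - max 0 0 = min tl.size sl.size
      from by omega]
    push_cast [Nat.cast_min]
    rcases min_cases ((tl.size : ℕ):ℝ) ((sl.size : ℕ):ℝ) with ⟨hmin, _⟩ | ⟨hmin, _⟩ <;>
      rw [hmin]
    · nlinarith [mul_le_mul_of_nonneg_left hC (Nat.cast_nonneg (α := ℝ) tl.size)]
    · exact h0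
  · rw [or_iff_not_imp_right]
    intro hii
    push_neg at hii
    obtain ⟨q, hq, hbig⟩ := hii
    rw [hNcard] at hbig
    rw [not_le] at h0
    rcases List.mem_append.mp hq with hqa | hqb
    · -- Case A : q on the left spine of t
      rw [show (BTree.node tl tr).leftSpine = tl.leftSpine ++ [tr] from rfl, List.mem_append,
        List.mem_singleton] at hqa
      rcases hqa with hqa | hqe
      · -- A1 : q in leftSpine tl
        obtain ⟨ad, lo, g1, g2, g3, g4⟩ := leftSpine_interval tl q hqa
        have e_q : q.seq = ((BTree.node tl tr).seq.drop lo).take ((lo + q.size) - lo) := by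
          rw [show lo + q.size - lo = q.size from by omega, seq_node,
            List.drop_append_of_le_length (show lo ≤ tl.seq.length from by
              have h : tl.size = tl.seq.length := rfl; omega),
            List.take_append_of_le_length (by
              rw [List.length_drop]
              have h : tl.size = tl.seq.length := rfl; omega)]
          exact g2
        have hndq : q.seq.Nodup := by
          rw [e_q]; exact ((List.take_sublist _ _).trans (List.drop_sublist _ _)).nodup hnd
        have hcardq : q.leaves.card = q.size := List.toFinset_card_of_nodup hndq
        rw [hcardq] at hbig
        obtain ⟨hb2, hb1⟩ := max_lt_iff.mp hbig
        have hq2 : 2 ≤ q.size := by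
          have h : 1 < q.size := by exact_mod_cast hb1
          omega
        have hq2' : 2 * (N:ℝ) < (q.size:ℝ) * C := by
          rw [div_lt_iff₀ hCpos] at hb2; linarith
        have hlo1 : 1 ≤ lo := by
          rcases Nat.eq_zero_or_pos lo with h | h
          · have := g4 h; omega
          · omega
        have hhi : lo + q.size ≤ N - 1 := by omega
        have hcast1 : ((lo:ℝ)) ≤ (lo:ℝ) + (q.size:ℝ)/2 := by
          have := Nat.cast_nonneg (α := ℝ) q.size; linarith
        obtain ⟨ad2, v, lo2, hi2, k1, k2, k3, k4, k5, k6⟩ :=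
          suffix_chain (BTree.node sl sr) ((lo:ℝ) + (q.size:ℝ)/2) lo hlo1 hcast1 (by
            rw [hsz2]
            have hre : (lo:ℝ) + (q.size:ℝ) + 1 ≤ (N:ℝ) := by
              exact_mod_cast (by omega : lo + q.size + 1 ≤ N)
            have h2 : (2:ℝ) ≤ (q.size:ℝ) := by exact_mod_cast hq2
            linarith)
        rw [← hseq] at k2
        rw [hsz2] at k4
        have hadq : (BTree.node tl tr).subtreeAt (false :: ad) = some q := by
          rw [subtreeAt_cons_false]; exact g1
        rcases k6 with ⟨e1, e2⟩ | ⟨e1, e2, e3⟩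
        · -- D1 : v is a suffix [lo2, N), lo ≤ lo2 ; witness x = first leaf
          rw [hsz2] at e1
          have hlo2n : lo2 ≤ lo + q.size := by
            have hr : (lo2:ℝ) ≤ (lo:ℝ) + (q.size:ℝ) := by
              have := Nat.cast_nonneg (α := ℝ) q.size; linarith [k5]
            exact_mod_cast hr
          refine build ht hseq.symm C hadq k1 e_q k2 (i := 0) (by omega) (by omega)
            (by omega) (by omega) ?_
          rw [hNcard, div_le_iff₀ hCpos,
            show min (lo + q.size) hi2 = lo + q.size from by omega,
            show max lo lo2 = lo2 from by omega,
            Nat.cast_sub (by omega)]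
          push_cast
          nlinarith [mul_nonneg (show (0:ℝ) ≤ (lo:ℝ) + (q.size:ℝ) - (lo2:ℝ) - (q.size:ℝ)/2
            from by linarith [k5]) hCpos.le, Nat.cast_nonneg (α := ℝ) N]
        · -- D2 : v = [lo2, hi2), hi2 ≤ N-1, θ < hi2, lo2 < lo ; witness x = last leaf
          rw [hsz2] at e1
          have hlohi : lo ≤ hi2 := by
            have hr : (lo:ℝ) < (hi2:ℝ) := by linarith
            have := hr.le
            exact_mod_cast this
          refine build ht hseq.symm C hadq k1 e_q k2 (i := N - 1) (by omega) (by omega)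
            (by omega) (by omega) ?_
          rw [hNcard, div_le_iff₀ hCpos,
            show max lo lo2 = lo from by omega,
            Nat.cast_sub (by omega : lo ≤ min (lo + q.size) hi2)]
          push_cast [Nat.cast_min]
          have hminge : (lo:ℝ) + (q.size:ℝ)/2 ≤ min ((lo:ℝ) + (q.size:ℝ)) ((hi2:ℝ)) := by
            refine le_min ?_ (le_of_lt e2)
            have := Nat.cast_nonneg (α := ℝ) q.size; linarith
          nlinarith [mul_nonneg (show (0:ℝ) ≤ min ((lo:ℝ) + (q.size:ℝ)) ((hi2:ℝ)) - (lo:ℝ)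
              - (q.size:ℝ)/2 from by linarith) hCpos.le,
            Nat.cast_nonneg (α := ℝ) N, hq2']
      · -- A2 : q = tr
        rw [hqe] at hbig
        have hndtr : tr.seq.Nodup := by
          have h : (tl.seq ++ tr.seq).Nodup := hnd
          exact h.of_append_right
        have hcardq : tr.leaves.card = tr.size := List.toFinset_card_of_nodup hndtr
        rw [hcardq] at hbig
        obtain ⟨hb2, hb1⟩ := max_lt_iff.mp hbig
        have hq2' : 2 * (N:ℝ) < (tr.size:ℝ) * C := by
          rw [div_lt_iff₀ hCpos] at hb2; linarith
        have hslle : sl.size ≤ tl.size := by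
          have h2p : (N:ℝ) ≤ 2 * (tl.size:ℝ) := by exact_mod_cast (by omega : N ≤ 2 * tl.size)
          have hr : (sl.size:ℝ) < (tl.size:ℝ) := by
            have hm : (sl.size:ℝ) * 4 ≤ (sl.size:ℝ) * C :=
              mul_le_mul_of_nonneg_left hC (Nat.cast_nonneg sl.size)
            have hn : (0:ℝ) ≤ (sl.size:ℝ) := Nat.cast_nonneg sl.size
            linarith
          exact_mod_cast hr.le
        refine build ht hseq.symm C (subtreeAt_single_true tl tr) (subtreeAt_single_true sl sr)
          e_tr e_sr (i := 0) (by omega) (by omega) (by omega) (by omega) ?_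
        rw [hNcard, div_le_iff₀ hCpos,
          show min N N - max tl.size sl.size = tr.size from by omega]
        linarith [Nat.cast_nonneg (α := ℝ) N]
    · -- Case B : q on the right spine of s
      rw [show (BTree.node sl sr).rightSpine = sl :: sr.rightSpine from rfl,
        List.mem_cons] at hqb
      rcases hqb with hqe | hqb
      · -- q = sl : contradicts smallness of sl
        exfalso
        rw [hqe] at hbig
        have hndsl : sl.seq.Nodup := by
          have h : (sl.seq ++ sr.seq).Nodup := hs
          exact h.of_append_left
        have hcardq : sl.leaves.card = sl.size := List.toFinset_card_of_nodup hndsl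
        rw [hcardq] at hbig
        obtain ⟨hb2, hb1⟩ := max_lt_iff.mp hbig
        rw [div_lt_iff₀ hCpos] at hb2
        have hNn : (0:ℝ) ≤ (N:ℝ) := Nat.cast_nonneg N
        linarith
      · -- q in rightSpine sr
        obtain ⟨ad, lo', g1, g2, g3, g4⟩ := rightSpine_interval sr q hqb
        have e_sr' : sr.seq = (BTree.node tl tr).seq.drop sl.size := by
          rw [hseq, seq_node]
          exact ((List.drop_left (l₁ := sl.seq) (l₂ := sr.seq))).symm
        have e_q : q.seq = ((BTree.node tl tr).seq.drop (sl.size + lo')).take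
            ((sl.size + lo' + q.size) - (sl.size + lo')) := by
          rw [show sl.size + lo' + q.size - (sl.size + lo') = q.size from by omega, g2, e_sr']
          congr 1
          rw [List.drop_drop]
        have hndq : q.seq.Nodup := by
          rw [e_q]; exact ((List.take_sublist _ _).trans (List.drop_sublist _ _)).nodup hnd
        have hcardq : q.leaves.card = q.size := List.toFinset_card_of_nodup hndq
        rw [hcardq] at hbig
        obtain ⟨hb2, hb1⟩ := max_lt_iff.mp hbig
        have hq2 : 2 ≤ q.size := by
          have h : 1 < q.size := by exact_mod_cast hb1
          omega
        have hq2' : 2 * (N:ℝ) < (q.size:ℝ) * C := by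
          rw [div_lt_iff₀ hCpos] at hb2; linarith
        have g4' : lo' + q.size < sr.size := by
          rcases eq_or_lt_of_le g3 with h | h
          · have := g4 h; omega
          · exact h
        have hchi : sl.size + lo' + q.size ≤ N - 1 := by omega
        obtain ⟨ad1, u, lo1, hi1, k1, k2, k3, k4, k5, k6⟩ :=
          prefix_chain (BTree.node tl tr) (((sl.size + lo' : ℕ):ℝ) + (q.size:ℝ)/2)
            (sl.size + lo' + q.size)
            (by
              have h1 : (1:ℝ) ≤ ((sl.size + lo' : ℕ):ℝ) := by
                exact_mod_cast (by omega : 1 ≤ sl.size + lo')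
              have := Nat.cast_nonneg (α := ℝ) q.size; linarith)
            (by push_cast; have := Nat.cast_nonneg (α := ℝ) q.size; linarith)
            (by rw [hszt]; omega)
        rw [hszt] at k4
        have hadq : (BTree.node sl sr).subtreeAt (true :: ad) = some q := by
          rw [subtreeAt_cons_true]; exact g1
        push_cast at k5
        rcases k6 with ⟨e1, e2⟩ | ⟨e1, e2, e3⟩
        · -- D1 : u = [0, hi1) with hi1 ≤ c + q.size ; witness x = last leaf
          have hcmin : sl.size + lo' ≤ hi1 := by
            have hr : ((sl.size + lo' : ℕ):ℝ) ≤ (hi1:ℝ) := by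
              push_cast
              have := Nat.cast_nonneg (α := ℝ) q.size; linarith [k5]
            exact_mod_cast hr
          refine build ht hseq.symm C k1 hadq k2 e_q (i := N - 1) (by omega) (by omega)
            (by omega) (by omega) ?_
          rw [hNcard, div_le_iff₀ hCpos,
            show max lo1 (sl.size + lo') = sl.size + lo' from by omega,
            Nat.cast_sub (by omega : sl.size + lo' ≤ min hi1 (sl.size + lo' + q.size))]
          push_cast [Nat.cast_min]
          have hminge : (sl.size:ℝ) + (lo':ℝ) + (q.size:ℝ)/2 ≤
              min ((hi1:ℝ)) ((sl.size:ℝ) + (lo':ℝ) + (q.size:ℝ)) := by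
            refine le_min (by linarith [k5]) ?_
            have := Nat.cast_nonneg (α := ℝ) q.size; linarith
          nlinarith [mul_nonneg (show (0:ℝ) ≤ min ((hi1:ℝ)) ((sl.size:ℝ) + (lo':ℝ) + (q.size:ℝ))
              - ((sl.size:ℝ) + (lo':ℝ)) - (q.size:ℝ)/2 from by linarith) hCpos.le,
            Nat.cast_nonneg (α := ℝ) N, hq2']
        · -- D2 : u = [lo1, hi1), lo1 ≥ 1, c + q.size < hi1 ; witness x = first leaf
          push_cast at e2
          have hmaxn : lo1 ≤ sl.size + lo' + q.size := by
            have hr : (lo1:ℝ) < (sl.size:ℝ) + (lo':ℝ) + (q.size:ℝ) := by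
              have := Nat.cast_nonneg (α := ℝ) q.size; linarith
            have : lo1 < sl.size + lo' + q.size := by exact_mod_cast hr
            omega
          refine build ht hseq.symm C k1 hadq k2 e_q (i := 0) (by omega) (by omega)
            (by omega) (by omega) ?_
          rw [hNcard, div_le_iff₀ hCpos,
            show min hi1 (sl.size + lo' + q.size) = sl.size + lo' + q.size from by omega,
            Nat.cast_sub (by omega : max lo1 (sl.size + lo') ≤ sl.size + lo' + q.size)]
          push_cast [Nat.cast_max]
          have hmaxle : max ((lo1:ℝ)) ((sl.size:ℝ) + (lo':ℝ)) ≤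
              (sl.size:ℝ) + (lo':ℝ) + (q.size:ℝ)/2 := by
            refine max_le (le_of_lt e2) ?_
            have := Nat.cast_nonneg (α := ℝ) q.size; linarith
          nlinarith [mul_nonneg (show (0:ℝ) ≤ (sl.size:ℝ) + (lo':ℝ) + (q.size:ℝ)
              - max ((lo1:ℝ)) ((sl.size:ℝ) + (lo':ℝ)) - (q.size:ℝ)/2 from by linarith) hCpos.le,
            Nat.cast_nonneg (α := ℝ) N, hq2']
end
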